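/- For i = 1, 2 let fᵢ, gᵢ be continuously differentiable admissible circle densities, and let α(fᵢ, gᵢ) denote the unique global minimizer over ℝ of the function α ↦ ∫₀¹ (Fᵢ⁻¹(t) − Gᵢ⁻¹(t − α))² dt, where Fᵢ, Gᵢ are the cumulative distribution functions of fᵢ, gᵢ. Then |α(f₁, g₁) − α(f₂, g₂)| ≤ ½ (∫₀¹ |f₁(t) − f₂(t)| dt + ∫₀¹ |g₁(t) − g₂(t)| dt). -/

import Mathlib

open MeasureTheory Set Function

namespace AlphaStab

lemma cdf_hasDerivAt {f F : ℝ → ℝ} (hfc : Continuous f)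
    (hF : ∀ t, F t = ∫ τ in (0:ℝ)..t, f τ) (x : ℝ) : HasDerivAt F (f x) x := by
  have h := (hfc.integral_hasStrictDerivAt 0 x).hasDerivAt
  have hFe : F = fun u => ∫ τ in (0:ℝ)..u, f τ := funext hF
  rw [hFe]; exact h

lemma cdf_sub {f F : ℝ → ℝ} (hfc : Continuous f)
    (hF : ∀ t, F t = ∫ τ in (0:ℝ)..t, f τ) (x y : ℝ) :
    F y - F x = ∫ τ in x..y, f τ := by
  rw [hF x, hF y,
    intervalIntegral.integral_interval_sub_left (hfc.intervalIntegrable _ _)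
      (hfc.intervalIntegrable _ _)]

lemma cdf_strictMono {f F : ℝ → ℝ} {η : ℝ} (hη : 0 < η) (hfc : Continuous f)
    (hfl : ∀ t, η ≤ f t) (hF : ∀ t, F t = ∫ τ in (0:ℝ)..t, f τ) : StrictMono F := by
  intro x y hxy
  have h1 := cdf_sub hfc hF x y
  have h2 : (∫ τ in x..y, (η : ℝ)) ≤ ∫ τ in x..y, f τ :=
    intervalIntegral.integral_mono_on hxy.le (intervalIntegrable_const)
      (hfc.intervalIntegrable _ _) (fun t _ => hfl t)
  rw [intervalIntegral.integral_const] at h2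
  have h3 : 0 < (y - x) * η := by
    have := sub_pos.2 hxy; positivity
  simp only [smul_eq_mul] at h2
  linarith

lemma cdf_add_one {f F : ℝ → ℝ} (hfc : Continuous f) (hfp : Function.Periodic f 1)
    (hfm : (∫ t in (0:ℝ)..1, f t) = 1)
    (hF : ∀ t, F t = ∫ τ in (0:ℝ)..t, f τ) (x : ℝ) : F (x + 1) = F x + 1 := by
  have h1 : (∫ τ in x..x+1, f τ) = ∫ τ in (0:ℝ)..0+1, f τ := hfp.intervalIntegral_add_eq x 0
  have h2 := cdf_sub hfc hF x (x + 1)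
  rw [h1] at h2
  simp only [zero_add] at h2
  rw [hfm] at h2
  linarith

lemma inv_continuous {F Finv : ℝ → ℝ} (hm : StrictMono F)
    (hFi' : Function.RightInverse Finv F) : Continuous Finv := by
  have hsurj : Function.Surjective F := hFi'.surjective
  have he : Finv = (StrictMono.orderIsoOfSurjective F hm hsurj).symm := by
    funext y
    apply hm.injective
    rw [hFi' y]
    have := (StrictMono.orderIsoOfSurjective F hm hsurj).apply_symm_apply y
    rw [StrictMono.coe_orderIsoOfSurjective] at this
    exact this.symm
  rw [he]
  exact OrderIso.continuous _

lemma inv_strictMono {F Finv : ℝ → ℝ} (hm : StrictMono F)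
    (hFi' : Function.RightInverse Finv F) : StrictMono Finv := by
  intro a b hab
  by_contra h
  push_neg at h
  have := hm.monotone h
  rw [hFi' a, hFi' b] at this
  exact absurd this (not_le.2 hab)

lemma inv_add_one {F Finv : ℝ → ℝ} (hm : StrictMono F)
    (hFi : Function.LeftInverse Finv F) (hFi' : Function.RightInverse Finv F)
    (hFa : ∀ x, F (x + 1) = F x + 1) (s : ℝ) : Finv (s + 1) = Finv s + 1 := by
  have h1 : F (Finv s + 1) = s + 1 := by rw [hFa, hFi' s]
  calc Finv (s + 1) = Finv (F (Finv s + 1)) := by rw [h1]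
    _ = Finv s + 1 := hFi _

lemma inv_hasDerivAt {f F Finv : ℝ → ℝ} {η : ℝ} (hη : 0 < η) (hfc : Continuous f)
    (hfl : ∀ t, η ≤ f t) (hF : ∀ t, F t = ∫ τ in (0:ℝ)..t, f τ)
    (hFi' : Function.RightInverse Finv F) (hc : Continuous Finv) (s : ℝ) :
    HasDerivAt Finv (f (Finv s))⁻¹ s :=
  HasDerivAt.of_local_left_inverse hc.continuousAt (cdf_hasDerivAt hfc hF (Finv s))
    (hη.trans_le (hfl _)).ne' (Filter.Eventually.of_forall hFi')

lemma abs_le_of_between {lo x hi : ℝ} (h1 : lo ≤ x) (h2 : x ≤ hi) : |x| ≤ |lo| + |hi| := by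
  rw [abs_le]
  constructor
  · have := neg_abs_le lo; have := le_abs_self hi
    have h3 : -|lo| ≤ lo := neg_abs_le lo
    nlinarith [abs_nonneg hi, abs_nonneg lo]
  · have := le_abs_self hi
    nlinarith [abs_nonneg lo]

lemma theta_eq_zero
    {f g F G Finv Ginv : ℝ → ℝ} {η : ℝ} (hη : 0 < η)
    (hfc : Continuous f) (hgc : Continuous g)
    (hfp : Function.Periodic f 1) (hgp : Function.Periodic g 1)
    (hfl : ∀ t, η ≤ f t) (hgl : ∀ t, η ≤ g t)
    (hfm : (∫ t in (0:ℝ)..1, f t) = 1) (hgm : (∫ t in (0:ℝ)..1, g t) = 1)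
    (hF : ∀ t, F t = ∫ τ in (0:ℝ)..t, f τ) (hG : ∀ t, G t = ∫ τ in (0:ℝ)..t, g τ)
    (hFi : Function.LeftInverse Finv F) (hFi' : Function.RightInverse Finv F)
    (hGi : Function.LeftInverse Ginv G) (hGi' : Function.RightInverse Ginv G)
    (α : ℝ)
    (hα : ∀ β : ℝ, (∫ t in (0:ℝ)..1, (Finv t - Ginv (t - α)) ^ 2)
      ≤ ∫ t in (0:ℝ)..1, (Finv t - Ginv (t - β)) ^ 2) :
    (∫ u in (0:ℝ)..1, (Finv (G u + α) - u)) = 0 := by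
  have hFm : StrictMono F := cdf_strictMono hη hfc hfl hF
  have hGm : StrictMono G := cdf_strictMono hη hgc hgl hG
  have hFinvC : Continuous Finv := inv_continuous hFm hFi'
  have hGinvC : Continuous Ginv := inv_continuous hGm hGi'
  have hGinvM : StrictMono Ginv := inv_strictMono hGm hGi'
  have hFinvM : StrictMono Finv := inv_strictMono hFm hFi'
  have hGa : ∀ x, G (x + 1) = G x + 1 := cdf_add_one hgc hgp hgm hG
  have hFa : ∀ x, F (x + 1) = F x + 1 := cdf_add_one hfc hfp hfm hF
  have hFinva : ∀ s, Finv (s + 1) = Finv s + 1 := inv_add_one hFm hFi hFi' hFa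
  have hGinva : ∀ s, Ginv (s + 1) = Ginv s + 1 := inv_add_one hGm hGi hGi' hGa
  have hgpos : ∀ y, (0:ℝ) < g y := fun y => hη.trans_le (hgl y)
  have hGC : Continuous G :=
    continuous_iff_continuousAt.2 fun x => (cdf_hasDerivAt hgc hG x).continuousAt
  -- the parametric derivative
  set φ' : ℝ → ℝ → ℝ := fun x t => 2 * (Finv t - Ginv (t - x)) * (g (Ginv (t - x)))⁻¹ with hφ'
  have hφcont : ∀ x : ℝ, Continuous (φ' x) := by
    intro x
    apply Continuous.mul
    · exact (continuous_const.mul (hFinvC.sub (hGinvC.comp (continuous_id.sub continuous_const))))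
    · exact ((hgc.comp (hGinvC.comp (continuous_id.sub continuous_const))).inv₀
        (fun t => (hgpos _).ne'))
  have h_diff : ∀ t x : ℝ, HasDerivAt (fun x => (Finv t - Ginv (t - x)) ^ 2) (φ' x t) x := by
    intro t x
    have h1 : HasDerivAt (fun x : ℝ => t - x) (-1) x := by
      simpa using (hasDerivAt_id x).const_sub t
    have h2 : HasDerivAt (fun x : ℝ => Ginv (t - x)) ((g (Ginv (t - x)))⁻¹ * (-1)) x :=
      (inv_hasDerivAt hη hgc hgl hG hGi' hGinvC (t - x)).comp x h1
    have h3 := h2.const_sub (Finv t)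
    have h4 := h3.fun_pow 2
    refine h4.congr_deriv ?_
    rw [hφ']
    ring
  -- bound on the derivative on a ball of radius 1 around α
  set B : ℝ := 2 * ((|Finv 0| + |Finv 1|) + (|Ginv (-(|α| + 1))| + |Ginv (2 + |α|)|)) * η⁻¹
    with hB
  have h_bound : ∀ t ∈ Set.uIoc (0:ℝ) 1, ∀ x ∈ Metric.ball α 1, ‖φ' x t‖ ≤ B := by
    intro t ht x hx
    rw [Set.uIoc_of_le (by norm_num : (0:ℝ) ≤ 1)] at ht
    have ht0 : 0 ≤ t := le_of_lt ht.1
    have ht1 : t ≤ 1 := ht.2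
    rw [Metric.mem_ball, Real.dist_eq, abs_lt] at hx
    have hxa : -(|α| + 1) ≤ t - x := by
      have h1 := neg_abs_le α; have h2 := le_abs_self α; linarith [hx.1, hx.2]
    have hxb : t - x ≤ 2 + |α| := by
      have h1 := neg_abs_le α; have h2 := le_abs_self α; linarith [hx.1, hx.2]
    have hF0 : |Finv t| ≤ |Finv 0| + |Finv 1| :=
      abs_le_of_between (hFinvM.monotone ht0) (hFinvM.monotone ht1)
    have hG0 : |Ginv (t - x)| ≤ |Ginv (-(|α| + 1))| + |Ginv (2 + |α|)| :=
      abs_le_of_between (hGinvM.monotone hxa) (hGinvM.monotone hxb)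
    have hginv : |(g (Ginv (t - x)))⁻¹| ≤ η⁻¹ := by
      rw [abs_of_pos (inv_pos.2 (hgpos _))]
      exact inv_anti₀ hη (hgl _)
    have hdiffb : |Finv t - Ginv (t - x)| ≤
        (|Finv 0| + |Finv 1|) + (|Ginv (-(|α| + 1))| + |Ginv (2 + |α|)|) :=
      (abs_sub _ _).trans (add_le_add hF0 hG0)
    have habs1 : |2 * (Finv t - Ginv (t - x))| ≤
        2 * ((|Finv 0| + |Finv 1|) + (|Ginv (-(|α| + 1))| + |Ginv (2 + |α|)|)) := by
      rw [abs_mul, abs_two]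
      nlinarith [abs_nonneg (Finv t - Ginv (t - x))]
    calc ‖φ' x t‖ = |2 * (Finv t - Ginv (t - x))| * |(g (Ginv (t - x)))⁻¹| := by
          rw [hφ']; simp only [Real.norm_eq_abs]; rw [abs_mul]
      _ ≤ (2 * ((|Finv 0| + |Finv 1|) + (|Ginv (-(|α| + 1))| + |Ginv (2 + |α|)|))) * η⁻¹ :=
          mul_le_mul habs1 hginv (abs_nonneg _) (by positivity)
      _ = B := by rw [hB]
  -- differentiation under the integral
  have key := intervalIntegral.hasDerivAt_integral_of_dominated_loc_of_deriv_le
    (F := fun x t => (Finv t - Ginv (t - x)) ^ 2) (F' := φ') (x₀ := α)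
    (a := (0:ℝ)) (b := 1) (μ := volume) (bound := fun _ => B)
    (Metric.ball_mem_nhds α one_pos)
    (Filter.Eventually.of_forall (fun x =>
      (((hFinvC.sub (hGinvC.comp (continuous_id.sub continuous_const))).pow 2)).aestronglyMeasurable))
    (((hFinvC.sub (hGinvC.comp (continuous_id.sub continuous_const))).pow 2).intervalIntegrable _ _)
    ((hφcont α).aestronglyMeasurable)
    (Filter.Eventually.of_forall (fun t ht x hx => h_bound t ht x hx))
    (intervalIntegrable_const)
    (Filter.Eventually.of_forall (fun t _ x _ => h_diff t x))
  obtain ⟨-, hI⟩ := key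
  -- the minimum gives derivative zero
  have hmin : IsLocalMin (fun x => ∫ t in (0:ℝ)..1, (Finv t - Ginv (t - x)) ^ 2) α :=
    Filter.Eventually.of_forall hα
  have hzero : (∫ t in (0:ℝ)..1, φ' α t) = 0 := hmin.hasDerivAt_eq_zero hI
  -- change of variables t = G u + α
  set a : ℝ := Ginv (-α) with ha
  have hγ : ∀ u ∈ Set.uIcc a (Ginv (1 - α)), HasDerivAt (fun u => G u + α) (g u) u :=
    fun u _ => (cdf_hasDerivAt hgc hG u).add_const α
  have hcv := intervalIntegral.integral_comp_smul_deriv hγ (hgc.continuousOn) (hφcont α)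
  have hend1 : G a + α = 0 := by rw [ha, hGi' (-α)]; ring
  have hend2 : G (Ginv (1 - α)) + α = 1 := by rw [hGi' (1 - α)]; ring
  rw [hend1, hend2, hzero] at hcv
  have hsimp : ∀ u : ℝ, g u • ((φ' α) ∘ (fun u => G u + α)) u = 2 * (Finv (G u + α) - u) := by
    intro u
    have h1 : G u + α - α = G u := by ring
    have hgu : g u ≠ 0 := (hgpos u).ne'
    simp only [Function.comp_apply, hφ', smul_eq_mul, h1, hGi u]
    field_simp
  rw [intervalIntegral.integral_congr (fun u _ => hsimp u)] at hcv
  -- periodicity to move the interval to [0,1]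
  have hb : Ginv (1 - α) = a + 1 := by
    rw [ha, ← hGinva (-α)]; congr 1; ring
  rw [hb] at hcv
  have hper : Function.Periodic (fun u => 2 * (Finv (G u + α) - u)) 1 := by
    intro u
    have : G (u + 1) + α = (G u + α) + 1 := by rw [hGa]; ring
    simp only [this, hFinva]
    ring
  have hshift := hper.intervalIntegral_add_eq a 0
  rw [hcv] at hshift
  have h2 : (∫ u in (0:ℝ)..(0+1), 2 * (Finv (G u + α) - u)) = 0 := hshift.symm
  norm_num at h2
  exact h2

/-- Pointwise bound on the difference of two CDFs of periodic densities with equal mass. -/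
lemma cdf_diff_le {f₁ f₂ F₁ F₂ : ℝ → ℝ}
    (hf₁c : Continuous f₁) (hf₂c : Continuous f₂)
    (hf₁p : Function.Periodic f₁ 1) (hf₂p : Function.Periodic f₂ 1)
    (hf₁m : (∫ t in (0:ℝ)..1, f₁ t) = 1) (hf₂m : (∫ t in (0:ℝ)..1, f₂ t) = 1)
    (hF₁ : ∀ t, F₁ t = ∫ τ in (0:ℝ)..t, f₁ τ) (hF₂ : ∀ t, F₂ t = ∫ τ in (0:ℝ)..t, f₂ τ)
    (x : ℝ) :
    F₁ x - F₂ x ≤ (1 / 2) * ∫ t in (0:ℝ)..1, |f₁ t - f₂ t| := by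
  set D : ℝ → ℝ := fun x => F₁ x - F₂ x with hD
  have hper : Function.Periodic D 1 := by
    intro u
    simp only [hD]
    rw [cdf_add_one hf₁c hf₁p hf₁m hF₁, cdf_add_one hf₂c hf₂p hf₂m hF₂]
    ring
  -- reduce to y ∈ [0,1]
  have hbnd : ∀ y : ℝ, 0 ≤ y → y ≤ 1 → D y ≤ (1 / 2) * ∫ t in (0:ℝ)..1, |f₁ t - f₂ t| := by
    intro y hy0 hy1
    have hDy : D y = ∫ t in (0:ℝ)..y, (f₁ t - f₂ t) := by
      simp only [hD]
      rw [hF₁, hF₂, ← intervalIntegral.integral_sub (hf₁c.intervalIntegrable _ _)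
        (hf₂c.intervalIntegrable _ _)]
    have hcont : Continuous (fun t => (|f₁ t - f₂ t| + (f₁ t - f₂ t)) / 2) := by
      continuity
    have h1 : (∫ t in (0:ℝ)..y, (f₁ t - f₂ t))
        ≤ ∫ t in (0:ℝ)..y, (|f₁ t - f₂ t| + (f₁ t - f₂ t)) / 2 := by
      apply intervalIntegral.integral_mono_on hy0
        ((hf₁c.sub hf₂c).intervalIntegrable _ _) (hcont.intervalIntegrable _ _)
      intro t _
      have := le_abs_self (f₁ t - f₂ t)
      simp only [Pi.sub_apply]
      linarith
    have h2 : (∫ t in (0:ℝ)..y, (|f₁ t - f₂ t| + (f₁ t - f₂ t)) / 2)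
        ≤ ∫ t in (0:ℝ)..1, (|f₁ t - f₂ t| + (f₁ t - f₂ t)) / 2 := by
      apply intervalIntegral.integral_mono_interval le_rfl hy0 hy1
      · filter_upwards with t
        simp only [Pi.zero_apply]
        linarith [neg_abs_le (f₁ t - f₂ t)]
      · exact hcont.intervalIntegrable _ _
    have h3 : (∫ t in (0:ℝ)..1, (|f₁ t - f₂ t| + (f₁ t - f₂ t)) / 2)
        = (1 / 2) * ∫ t in (0:ℝ)..1, |f₁ t - f₂ t| := by
      have e1 : ∀ t : ℝ, (|f₁ t - f₂ t| + (f₁ t - f₂ t)) / 2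
          = (1/2) * |f₁ t - f₂ t| + (1/2) * (f₁ t - f₂ t) := by intro t; ring
      rw [intervalIntegral.integral_congr (fun t _ => e1 t),
        intervalIntegral.integral_add
          (((hf₁c.fun_sub hf₂c).abs.intervalIntegrable _ _).const_mul _)
          (((hf₁c.fun_sub hf₂c).intervalIntegrable _ _).const_mul _),
        intervalIntegral.integral_const_mul, intervalIntegral.integral_const_mul,
        intervalIntegral.integral_sub (hf₁c.intervalIntegrable _ _)
          (hf₂c.intervalIntegrable _ _), hf₁m, hf₂m]
      ring
    rw [hDy]
    linarith
  have hfract : D x = D (Int.fract x) := by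
    have he : Int.fract x = x - (⌊x⌋ : ℤ) * 1 := by
      rw [Int.fract]; push_cast; ring
    rw [he]
    exact (hper.sub_int_mul_eq ⌊x⌋).symm
  rw [show F₁ x - F₂ x = D x from rfl, hfract]
  exact hbnd _ (Int.fract_nonneg x) (Int.fract_lt_one x).le

/-- Comparison of inverse CDFs from a pointwise CDF bound. -/
lemma inv_le_inv_shift {F₁ F₂ Finv₁ Finv₂ : ℝ → ℝ} {d : ℝ}
    (h₂m : StrictMono F₂)
    (hF₁i' : Function.RightInverse Finv₁ F₁) (hF₂i' : Function.RightInverse Finv₂ F₂)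
    (hb : ∀ x, F₂ x ≤ F₁ x + d) (s : ℝ) : Finv₁ s ≤ Finv₂ (s + d) := by
  have h : F₂ (Finv₁ s) ≤ s + d := by
    have := hb (Finv₁ s); rwa [hF₁i' s] at this
  have h2 : F₂ (Finv₂ (s + d)) = s + d := hF₂i' (s + d)
  exact h₂m.le_iff_le.mp (by rw [h2]; exact h)

end AlphaStab

open AlphaStab

/-- stability estimate for the minimizer α(f,g) of
I(α; f, g) = ∫₀¹ (F⁻¹(t) − G⁻¹(t − α))² dt with respect to L¹-perturbations of the
continuously differentiable admissible densities. -/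
theorem alpha_stability_estimate
    (f₁ g₁ F₁ G₁ Finv₁ Ginv₁ f₂ g₂ F₂ G₂ Finv₂ Ginv₂ : ℝ → ℝ) (η : ℝ) (hη : 0 < η)
    (hf₁c : ContDiff ℝ 1 f₁) (hg₁c : ContDiff ℝ 1 g₁)
    (hf₂c : ContDiff ℝ 1 f₂) (hg₂c : ContDiff ℝ 1 g₂)
    (hf₁p : Function.Periodic f₁ 1) (hg₁p : Function.Periodic g₁ 1)
    (hf₂p : Function.Periodic f₂ 1) (hg₂p : Function.Periodic g₂ 1)
    (hf₁l : ∀ t, η ≤ f₁ t) (hg₁l : ∀ t, η ≤ g₁ t)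
    (hf₂l : ∀ t, η ≤ f₂ t) (hg₂l : ∀ t, η ≤ g₂ t)
    (hf₁m : (∫ t in (0:ℝ)..1, f₁ t) = 1) (hg₁m : (∫ t in (0:ℝ)..1, g₁ t) = 1)
    (hf₂m : (∫ t in (0:ℝ)..1, f₂ t) = 1) (hg₂m : (∫ t in (0:ℝ)..1, g₂ t) = 1)
    (hF₁ : ∀ t, F₁ t = ∫ τ in (0:ℝ)..t, f₁ τ) (hG₁ : ∀ t, G₁ t = ∫ τ in (0:ℝ)..t, g₁ τ)
    (hF₂ : ∀ t, F₂ t = ∫ τ in (0:ℝ)..t, f₂ τ) (hG₂ : ∀ t, G₂ t = ∫ τ in (0:ℝ)..t, g₂ τ)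
    (hF₁i : Function.LeftInverse Finv₁ F₁) (hF₁i' : Function.RightInverse Finv₁ F₁)
    (hG₁i : Function.LeftInverse Ginv₁ G₁) (hG₁i' : Function.RightInverse Ginv₁ G₁)
    (hF₂i : Function.LeftInverse Finv₂ F₂) (hF₂i' : Function.RightInverse Finv₂ F₂)
    (hG₂i : Function.LeftInverse Ginv₂ G₂) (hG₂i' : Function.RightInverse Ginv₂ G₂)
    (α₁ α₂ : ℝ)
    (hα₁ : ∀ α : ℝ, (∫ t in (0:ℝ)..1, (Finv₁ t - Ginv₁ (t - α₁)) ^ 2)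
      ≤ ∫ t in (0:ℝ)..1, (Finv₁ t - Ginv₁ (t - α)) ^ 2)
    (hα₂ : ∀ α : ℝ, (∫ t in (0:ℝ)..1, (Finv₂ t - Ginv₂ (t - α₂)) ^ 2)
      ≤ ∫ t in (0:ℝ)..1, (Finv₂ t - Ginv₂ (t - α)) ^ 2) :
    |α₁ - α₂| ≤ (1 / 2) * ((∫ t in (0:ℝ)..1, |f₁ t - f₂ t|) + ∫ t in (0:ℝ)..1, |g₁ t - g₂ t|) := by
  have hf₁C : Continuous f₁ := hf₁c.continuous
  have hg₁C : Continuous g₁ := hg₁c.continuous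
  have hf₂C : Continuous f₂ := hf₂c.continuous
  have hg₂C : Continuous g₂ := hg₂c.continuous
  set δF : ℝ := (1 / 2) * ∫ t in (0:ℝ)..1, |f₁ t - f₂ t| with hδF
  set δG : ℝ := (1 / 2) * ∫ t in (0:ℝ)..1, |g₁ t - g₂ t| with hδG
  set δ : ℝ := δF + δG with hδ
  have θ₁ : (∫ u in (0:ℝ)..1, (Finv₁ (G₁ u + α₁) - u)) = 0 :=
    theta_eq_zero hη hf₁C hg₁C hf₁p hg₁p hf₁l hg₁l hf₁m hg₁m hF₁ hG₁
      hF₁i hF₁i' hG₁i hG₁i' α₁ hα₁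
  have θ₂ : (∫ u in (0:ℝ)..1, (Finv₂ (G₂ u + α₂) - u)) = 0 :=
    theta_eq_zero hη hf₂C hg₂C hf₂p hg₂p hf₂l hg₂l hf₂m hg₂m hF₂ hG₂
      hF₂i hF₂i' hG₂i hG₂i' α₂ hα₂
  have hF₁m : StrictMono F₁ := cdf_strictMono hη hf₁C hf₁l hF₁
  have hF₂m : StrictMono F₂ := cdf_strictMono hη hf₂C hf₂l hF₂
  have hFinv₁M : StrictMono Finv₁ := inv_strictMono hF₁m hF₁i'
  have hFinv₂M : StrictMono Finv₂ := inv_strictMono hF₂m hF₂i'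
  have cFinv₁ : Continuous Finv₁ := inv_continuous hF₁m hF₁i'
  have cFinv₂ : Continuous Finv₂ := inv_continuous hF₂m hF₂i'
  have cG₁ : Continuous G₁ :=
    continuous_iff_continuousAt.2 fun x => (cdf_hasDerivAt hg₁C hG₁ x).continuousAt
  have cG₂ : Continuous G₂ :=
    continuous_iff_continuousAt.2 fun x => (cdf_hasDerivAt hg₂C hG₂ x).continuousAt
  -- CDF comparisons
  have habsf : (∫ t in (0:ℝ)..1, |f₂ t - f₁ t|) = ∫ t in (0:ℝ)..1, |f₁ t - f₂ t| :=
    intervalIntegral.integral_congr fun t _ => abs_sub_comm _ _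
  have habsg : (∫ t in (0:ℝ)..1, |g₂ t - g₁ t|) = ∫ t in (0:ℝ)..1, |g₁ t - g₂ t| :=
    intervalIntegral.integral_congr fun t _ => abs_sub_comm _ _
  have hbF : ∀ x, F₂ x ≤ F₁ x + δF := by
    intro x
    have h := cdf_diff_le hf₂C hf₁C hf₂p hf₁p hf₂m hf₁m hF₂ hF₁ x
    rw [habsf] at h; rw [hδF]; linarith
  have hbF' : ∀ x, F₁ x ≤ F₂ x + δF := by
    intro x
    have h := cdf_diff_le hf₁C hf₂C hf₁p hf₂p hf₁m hf₂m hF₁ hF₂ x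
    rw [hδF]; linarith
  have hbG : ∀ x, G₁ x ≤ G₂ x + δG := by
    intro x
    have h := cdf_diff_le hg₁C hg₂C hg₁p hg₂p hg₁m hg₂m hG₁ hG₂ x
    rw [hδG]; linarith
  have hbG' : ∀ x, G₂ x ≤ G₁ x + δG := by
    intro x
    have h := cdf_diff_le hg₂C hg₁C hg₂p hg₁p hg₂m hg₁m hG₂ hG₁ x
    rw [habsg] at h; rw [hδG]; linarith
  -- pointwise comparisons of the theta integrands
  have hup : ∀ u : ℝ, Finv₁ (G₁ u + α₁) ≤ Finv₂ (G₂ u + (α₁ + δ)) := by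
    intro u
    have h1 : Finv₁ (G₁ u + α₁) ≤ Finv₂ (G₁ u + α₁ + δF) :=
      inv_le_inv_shift hF₂m hF₁i' hF₂i' hbF _
    have h2 : G₁ u + α₁ + δF ≤ G₂ u + (α₁ + δ) := by
      have := hbG u; rw [hδ]; linarith
    exact h1.trans (hFinv₂M.monotone h2)
  have hdn : ∀ u : ℝ, Finv₂ (G₂ u + (α₁ - δ)) ≤ Finv₁ (G₁ u + α₁) := by
    intro u
    have h1 : G₂ u + (α₁ - δ) ≤ G₁ u + α₁ - δF := by
      have := hbG' u; rw [hδ]; linarith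
    have h2 : Finv₂ (G₂ u + (α₁ - δ)) ≤ Finv₂ (G₁ u + α₁ - δF) := hFinv₂M.monotone h1
    have h3 : Finv₂ (G₁ u + α₁ - δF) ≤ Finv₁ ((G₁ u + α₁ - δF) + δF) :=
      inv_le_inv_shift hF₁m hF₂i' hF₁i' hbF' _
    have h4 : (G₁ u + α₁ - δF) + δF = G₁ u + α₁ := by ring
    rw [h4] at h3
    exact h2.trans h3
  -- integrability
  have cint : ∀ β : ℝ, Continuous (fun u : ℝ => Finv₂ (G₂ u + β) - u) := fun β =>
    (cFinv₂.comp (cG₂.add continuous_const)).sub continuous_id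
  have cint1 : Continuous (fun u : ℝ => Finv₁ (G₁ u + α₁) - u) :=
    (cFinv₁.comp (cG₁.add continuous_const)).sub continuous_id
  have cint2 : ∀ β γ : ℝ, Continuous (fun u : ℝ => Finv₂ (G₂ u + β) - Finv₂ (G₂ u + γ)) :=
    fun β γ => (cFinv₂.comp (cG₂.add continuous_const)).sub
      (cFinv₂.comp (cG₂.add continuous_const))
  -- integral comparisons
  have int_up : (0:ℝ) ≤ ∫ u in (0:ℝ)..1, (Finv₂ (G₂ u + (α₁ + δ)) - u) := by
    have hmono : (∫ u in (0:ℝ)..1, (Finv₁ (G₁ u + α₁) - u))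
        ≤ ∫ u in (0:ℝ)..1, (Finv₂ (G₂ u + (α₁ + δ)) - u) := by
      apply intervalIntegral.integral_mono_on (by norm_num)
        (cint1.intervalIntegrable _ _) ((cint _).intervalIntegrable _ _)
      intro u _
      have := hup u
      linarith
    linarith
  have int_dn : (∫ u in (0:ℝ)..1, (Finv₂ (G₂ u + (α₁ - δ)) - u)) ≤ 0 := by
    have hmono : (∫ u in (0:ℝ)..1, (Finv₂ (G₂ u + (α₁ - δ)) - u))
        ≤ ∫ u in (0:ℝ)..1, (Finv₁ (G₁ u + α₁) - u) := by
      apply intervalIntegral.integral_mono_on (by norm_num)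
        ((cint _).intervalIntegrable _ _) (cint1.intervalIntegrable _ _)
      intro u _
      have := hdn u
      linarith
    linarith
  -- conclude
  have key1 : α₂ ≤ α₁ + δ := by
    by_contra hlt
    push_neg at hlt
    have hpos : (0:ℝ) < ∫ u in (0:ℝ)..1,
        (Finv₂ (G₂ u + α₂) - Finv₂ (G₂ u + (α₁ + δ))) := by
      apply intervalIntegral.intervalIntegral_pos_of_pos_on
      · exact (cint2 _ _).intervalIntegrable _ _
      · intro u _
        exact sub_pos.2 (hFinv₂M (by linarith))
      · norm_num
    have hsplit : (∫ u in (0:ℝ)..1, (Finv₂ (G₂ u + α₂) - u))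
        = (∫ u in (0:ℝ)..1, (Finv₂ (G₂ u + α₂) - Finv₂ (G₂ u + (α₁ + δ))))
          + ∫ u in (0:ℝ)..1, (Finv₂ (G₂ u + (α₁ + δ)) - u) := by
      rw [← intervalIntegral.integral_add
        ((cint2 _ _).intervalIntegrable _ _)
        ((cint _).intervalIntegrable _ _)]
      exact intervalIntegral.integral_congr fun u _ => by ring
    rw [θ₂] at hsplit
    linarith
  have key2 : α₁ - δ ≤ α₂ := by
    by_contra hlt
    push_neg at hlt
    have hpos : (0:ℝ) < ∫ u in (0:ℝ)..1,
        (Finv₂ (G₂ u + (α₁ - δ)) - Finv₂ (G₂ u + α₂)) := by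
      apply intervalIntegral.intervalIntegral_pos_of_pos_on
      · exact (cint2 _ _).intervalIntegrable _ _
      · intro u _
        exact sub_pos.2 (hFinv₂M (by linarith))
      · norm_num
    have hsplit : (∫ u in (0:ℝ)..1, (Finv₂ (G₂ u + (α₁ - δ)) - u))
        = (∫ u in (0:ℝ)..1, (Finv₂ (G₂ u + (α₁ - δ)) - Finv₂ (G₂ u + α₂)))
          + ∫ u in (0:ℝ)..1, (Finv₂ (G₂ u + α₂) - u) := by
      rw [← intervalIntegral.integral_add
        ((cint2 _ _).intervalIntegrable _ _)
        ((cint _).intervalIntegrable _ _)]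
      exact intervalIntegral.integral_congr fun u _ => by ring
    rw [θ₂] at hsplit
    linarith
  have hfin : (1 / 2) * ((∫ t in (0:ℝ)..1, |f₁ t - f₂ t|) + ∫ t in (0:ℝ)..1, |g₁ t - g₂ t|)
      = δ := by rw [hδ, hδF, hδG]; ring
  rw [hfin]
  exact abs_le.2 ⟨by linarith, by linarith⟩
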